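/- arXiv:1309.7854 — 5 statements merged into one kernel-verified Lean document; each statement's English description precedes it below -/
import Mathlib

section
/- Let G be a finite p-group of maximal class of order p^m with m ≥ 4 and p ≥ 3. Then the quotient G/γ_3(G) has exponent p, where γ_3(G) is the third term of the lower central series. -/
open Subgroup QuotientGroup Function
open scoped commutatorElement

section Aux
variable {G : Type*} [Group G]

private lemma aux_shift (x y c : G) (hcy : Commute c y)
    (hyx : y * x = c * (x * y)) : ∀ n : ℕ, y ^ n * x = c ^ n * (x * y ^ n) := by
  intro n
  induction n with
  | zero => simp
  | succ n ih =>
    calc y ^ (n+1) * x = y * (y ^ n * x) := by rw [pow_succ']; rw [mul_assoc]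
      _ = y * (c ^ n * (x * y ^ n)) := by rw [ih]
      _ = c ^ n * (y * (x * y ^ n)) := by
            rw [← mul_assoc, ← (hcy.pow_left n).eq, mul_assoc]
      _ = c ^ n * ((y * x) * y ^ n) := by rw [mul_assoc]
      _ = c ^ n * ((c * (x * y)) * y ^ n) := by rw [hyx]
      _ = c ^ (n+1) * (x * y ^ (n+1)) := by group

private lemma aux_pow (x y c : G) (hcx : Commute c x) (hcy : Commute c y)
    (hyx : y * x = c * (x * y)) : ∀ n : ℕ, (x * y) ^ n = c ^ n.choose 2 * (x ^ n * y ^ n) := by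
  intro n
  induction n with
  | zero => simp
  | succ n ih =>
    calc (x*y)^(n+1) = (x*y)^n * (x*y) := pow_succ _ _
      _ = (c ^ n.choose 2 * (x ^ n * y ^ n)) * (x*y) := by rw [ih]
      _ = c ^ n.choose 2 * (x ^ n * ((y ^ n * x) * y)) := by group
      _ = c ^ n.choose 2 * (x ^ n * ((c ^ n * (x * y ^ n)) * y)) := by
            rw [aux_shift x y c hcy hyx n]
      _ = c ^ n.choose 2 * ((x ^ n * c ^ n) * ((x * y ^ n) * y)) := by group
      _ = c ^ n.choose 2 * ((c ^ n * x ^ n) * ((x * y ^ n) * y)) := by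
            rw [(hcx.pow_pow n n).eq]
      _ = (c ^ n.choose 2 * c ^ n) * (x ^ (n+1) * y ^ (n+1)) := by group
      _ = c ^ ((n+1).choose 2) * (x ^ (n+1) * y ^ (n+1)) := by
            rw [← pow_add, Nat.choose_succ_succ, Nat.choose_one_right, Nat.add_comm]

private lemma lcs_map_eq {H : Type*} [Group H] (f : G →* H) (hf : Surjective f) :
    ∀ n, ((⊤ : Subgroup G).lowerCentralSeries n).map f = (⊤ : Subgroup H).lowerCentralSeries n := by
  intro n
  induction n with
  | zero => simpa using Subgroup.map_top_of_surjective f hf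
  | succ n ih =>
    show Subgroup.map f ⁅(⊤ : Subgroup G).lowerCentralSeries n, (⊤ : Subgroup G)⁆ = _
    rw [Subgroup.map_commutator, ih, Subgroup.map_top_of_surjective f hf]
    rfl

private lemma card_map_mk' (N K : Subgroup G) [N.Normal] (h : N ≤ K) :
    Nat.card (K.map (QuotientGroup.mk' N)) * Nat.card N = Nat.card K := by
  have h1 : N.relIndex K = Nat.card (K.map (QuotientGroup.mk' N)) := by
    conv_lhs => rw [← QuotientGroup.ker_mk' (N := N)]
    exact Subgroup.relIndex_ker (K := K) (QuotientGroup.mk' N)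
  have h2 : Nat.card (N.subgroupOf K) = Nat.card N :=
    Nat.card_congr (Subgroup.subgroupOfEquivOfLe h).toEquiv
  rw [← h1, Subgroup.relIndex, ← h2, mul_comm]
  exact Subgroup.card_mul_index _

end Aux

private lemma core {G : Type*} [Group G] [Finite G] (p : ℕ) (hp : p.Prime) (hp3 : 3 ≤ p)
    (h4 : Nat.card G = p ^ 4)
    (h1 : Nat.card ((⊤ : Subgroup G).lowerCentralSeries 1) = p ^ 2)
    (h2 : Nat.card ((⊤ : Subgroup G).lowerCentralSeries 2) = p)
    (h3 : (⊤ : Subgroup G).lowerCentralSeries 3 = ⊥)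
    (hpow : ∀ g : G, g ^ p ∈ (⊤ : Subgroup G).lowerCentralSeries 1) :
    Monoid.exponent (G ⧸ (⊤ : Subgroup G).lowerCentralSeries 2) = p := by
  set L1 := (⊤ : Subgroup G).lowerCentralSeries 1 with hL1def
  set L2 := (⊤ : Subgroup G).lowerCentralSeries 2 with hL2def
  have hL21 : L2 ≤ L1 := Subgroup.lowerCentralSeries_antitone _ (by norm_num)
  -- L2 is central
  have hcent : ∀ a ∈ L2, ∀ g : G, a * g = g * a := by
    intro a ha g
    have hmem : ⁅a, g⁆ ∈ (⊤ : Subgroup G).lowerCentralSeries 3 :=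
      Subgroup.commutator_mem_commutator ha (Subgroup.mem_top g)
    rw [h3, Subgroup.mem_bot] at hmem
    exact commutatorElement_eq_one_iff_mul_comm.mp hmem
  set Q := G ⧸ L2 with hQdef
  set π : G →* Q := QuotientGroup.mk' L2 with hπdef
  have hπs : Surjective π := QuotientGroup.mk'_surjective L2
  have hQ1 : (⊤ : Subgroup Q).lowerCentralSeries 1 = L1.map π := (lcs_map_eq π hπs 1).symm
  have hQ2 : (⊤ : Subgroup Q).lowerCentralSeries 2 = ⊥ := by
    rw [← lcs_map_eq π hπs 2, Subgroup.map_eq_bot_iff, hπdef, QuotientGroup.ker_mk']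
  have hQcent : ∀ a b g : Q, Commute ⁅a, b⁆ g := by
    intro a b g
    have h5 : ⁅⁅a,b⁆, g⁆ ∈ (⊤ : Subgroup Q).lowerCentralSeries 2 := by
      refine Subgroup.commutator_mem_commutator ?_ (Subgroup.mem_top g)
      exact Subgroup.commutator_mem_commutator (Subgroup.mem_top a) (Subgroup.mem_top b)
    rw [hQ2, Subgroup.mem_bot] at h5
    exact commutatorElement_eq_one_iff_commute.mp h5
  have hcardQ1 : Nat.card ((⊤ : Subgroup Q).lowerCentralSeries 1) = p := by
    rw [hQ1]
    have hc := card_map_mk' L2 L1 hL21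
    rw [h2, h1] at hc
    have hpp : p ^ 2 = p * p := by ring
    exact Nat.eq_of_mul_eq_mul_right (by omega) (hc.trans hpp)
  have hQord : ∀ a b : Q, ⁅a, b⁆ ^ p = 1 := by
    intro a b
    have hmem : ⁅a, b⁆ ∈ (⊤ : Subgroup Q).lowerCentralSeries 1 :=
      Subgroup.commutator_mem_commutator (Subgroup.mem_top a) (Subgroup.mem_top b)
    have hx : (⟨⁅a,b⁆, hmem⟩ : (⊤ : Subgroup Q).lowerCentralSeries 1) ^ p = 1 := by
      rw [← hcardQ1]; exact pow_card_eq_one'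
    have := congrArg (Subtype.val) hx
    simpa only [SubgroupClass.coe_pow, OneMemClass.coe_one] using this
  have hmul : ∀ x y : Q, (x * y) ^ p = x ^ p * y ^ p := by
    intro x y
    have hyx : y * x = ⁅y, x⁆ * (x * y) := by group
    have hc := aux_pow x y ⁅y, x⁆ (hQcent y x x) (hQcent y x y) hyx p
    have hodd : 2 ∣ p - 1 := by
      have : Odd p := hp.odd_of_ne_two (by omega)
      obtain ⟨k, hk⟩ := this
      omega
    have hch : p.choose 2 = p * ((p-1)/2) := by
      rw [Nat.choose_two_right, Nat.mul_div_assoc p hodd]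
    rw [hc, hch, pow_mul, hQord y x, one_pow, one_mul]
  -- centralizer of L1
  set C := Subgroup.centralizer (L1 : Set G) with hCdef
  have hCne : C ≠ ⊤ := by
    intro hCt
    have hb : L2 = ⊥ := by
      have hle : (⁅L1, (⊤ : Subgroup G)⁆ : Subgroup G) ≤ ⊥ := by
        refine Subgroup.commutator_le.mpr ?_
        intro g1 hg1 g2 _
        rw [Subgroup.mem_bot, commutatorElement_eq_one_iff_mul_comm]
        have hg2 : g2 ∈ C := hCt ▸ Subgroup.mem_top g2
        exact Subgroup.mem_centralizer_iff.mp hg2 g1 hg1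
      exact le_bot_iff.mp hle
    rw [hb, Subgroup.card_bot] at h2
    omega
  have hkey : ∀ g : G, g ∉ C → g ^ p ∈ L2 := by
    intro g hg
    by_contra hgp
    have ha1 : g ^ p ∈ L1 := hpow g
    set H := Subgroup.closure {g ^ p} ⊔ L2 with hHdef
    have hHle : H ≤ L1 := by
      refine sup_le ?_ hL21
      rw [Subgroup.closure_le]
      simpa using ha1
    have hgpH : g ^ p ∈ H := Subgroup.mem_sup_left (Subgroup.subset_closure rfl)
    have hgt : p < Nat.card H := by
      by_contra hle
      push_neg at hle
      have : L2 = H := Subgroup.eq_of_le_of_card_ge le_sup_right (by omega)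
      exact hgp (this ▸ hgpH)
    have hcardH : Nat.card H ∣ p ^ 2 := h1 ▸ Subgroup.card_dvd_of_le hHle
    obtain ⟨k, hk2, hck⟩ := (Nat.dvd_prime_pow hp).mp hcardH
    rw [hck] at hgt
    have hk : k = 2 := by
      by_contra hne
      have hk1 : k ≤ 1 := by omega
      have hle2 : p ^ k ≤ p := by
        calc p ^ k ≤ p ^ 1 := Nat.pow_le_pow_right (by omega) hk1
          _ = p := pow_one p
      omega
    have hHL1 : H = L1 := by
      refine Subgroup.eq_of_le_of_card_ge hHle ?_
      rw [h1, hck, hk]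
    apply hg
    have hL1cent : L1 ≤ Subgroup.centralizer {g} := by
      rw [← hHL1]
      refine sup_le ?_ ?_
      · rw [Subgroup.closure_le]
        intro a ha
        rw [Set.mem_singleton_iff] at ha
        subst ha
        rw [SetLike.mem_coe, Subgroup.mem_centralizer_iff]
        rintro m rfl
        exact ((Commute.refl m).pow_right p).eq
      · intro a ha
        rw [Subgroup.mem_centralizer_iff]
        rintro m rfl
        exact (hcent a ha m).symm
    rw [hCdef, Subgroup.mem_centralizer_iff]
    intro h hh
    have := hL1cent hh
    rw [Subgroup.mem_centralizer_iff] at this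
    exact (this g rfl).symm
  obtain ⟨y, hy⟩ : ∃ y : G, y ∉ C := by
    by_contra hcon
    push_neg at hcon
    exact hCne (Subgroup.eq_top_iff' C |>.mpr hcon)
  have hall : ∀ g : G, g ^ p ∈ L2 := by
    intro g
    by_cases hgC : g ∈ C
    · have h5 : g * y ∉ C := fun hgy => hy (by simpa using mul_mem (inv_mem hgC) hgy)
      have e1 : (π (g * y)) ^ p = 1 := by
        rw [← map_pow]
        exact (QuotientGroup.eq_one_iff _).mpr (hkey _ h5)
      have e2 : (π y) ^ p = 1 := by
        rw [← map_pow]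
        exact (QuotientGroup.eq_one_iff _).mpr (hkey _ hy)
      have hm := hmul (π g) (π y)
      rw [← map_mul, e1, e2, mul_one] at hm
      have : π (g ^ p) = 1 := by rw [map_pow]; exact hm.symm
      exact (QuotientGroup.eq_one_iff _).mp this
    · exact hkey g hgC
  have hdvd : Monoid.exponent Q ∣ p := by
    refine Monoid.exponent_dvd_of_forall_pow_eq_one fun q => ?_
    obtain ⟨g, rfl⟩ := hπs q
    rw [← map_pow]
    exact (QuotientGroup.eq_one_iff _).mpr (hall g)
  rcases (Nat.dvd_prime hp).mp hdvd with he | he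
  · exfalso
    have hsub : ∀ q : Q, q = 1 := fun q => by
      have := Monoid.pow_exponent_eq_one q
      rwa [he, pow_one] at this
    have hQcard : Nat.card Q * p = p ^ 4 := by
      rw [← h4, ← h2]
      exact (Subgroup.card_eq_card_quotient_mul_card_subgroup L2).symm
    have : Subsingleton Q := ⟨fun a b => by rw [hsub a, hsub b]⟩
    have hone : Nat.card Q = 1 := Nat.card_of_subsingleton (1 : Q)
    rw [hone, one_mul] at hQcard
    have hlt : p < p ^ 4 := by
      calc p = p ^ 1 := (pow_one p).symm
        _ < p ^ 4 := Nat.pow_lt_pow_right hp.one_lt (by omega)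
    omega
  · exact he

/-- A finite `p`-group of maximal class of order `p^m`, `m ≥ 4`, `p ≥ 3`, satisfies
`exp(G/γ₃(G)) = p`.  (Note `γ₃(G) = (⊤ : Subgroup G).lowerCentralSeries 2` since Mathlib's lower
central series starts with `(⊤ : Subgroup G).lowerCentralSeries 0 = ⊤ = γ₁(G)`.) -/
theorem stmt_4 {G : Type*} [Group G] [Finite G] (p m : ℕ) (hp : p.Prime) (hp3 : 3 ≤ p)
    (hm : 4 ≤ m) (hcard : Nat.card G = p ^ m)
    [Group.IsNilpotent G] (hclass : Group.nilpotencyClass G + 1 = m) :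
    Monoid.exponent (G ⧸ (⊤ : Subgroup G).lowerCentralSeries 2) = p := by
  have hp1 : 1 < p := hp.one_lt
  have hclass' : Group.nilpotencyClass G = m - 1 := by omega
  have hbot : (⊤ : Subgroup G).lowerCentralSeries (m-1) = ⊥ := by
    rw [← hclass']; exact Subgroup.lowerCentralSeries_nilpotencyClass
  -- strict descent below the nilpotency class
  have hstrict : ∀ n, n < m - 1 → (⊤ : Subgroup G).lowerCentralSeries (n+1) < (⊤ : Subgroup G).lowerCentralSeries n := by
    intro n hn
    refine lt_of_le_of_ne (Subgroup.lowerCentralSeries_antitone _ (Nat.le_succ n)) ?_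
    intro heq
    have key : ∀ k, (⊤ : Subgroup G).lowerCentralSeries (n + k) = (⊤ : Subgroup G).lowerCentralSeries n := by
      intro k
      induction k with
      | zero => rfl
      | succ k ih =>
        have h0 : (⊤ : Subgroup G).lowerCentralSeries (n + (k+1)) = ⁅(⊤ : Subgroup G).lowerCentralSeries (n+k), ⊤⁆ := rfl
        rw [h0, ih]
        exact heq
    have hno : (⊤ : Subgroup G).lowerCentralSeries n = ⊥ := by
      rw [← key (m - 1 - n), (by omega : n + (m - 1 - n) = m - 1)]
      exact hbot
    have := Subgroup.lowerCentralSeries_eq_bot_iff_nilpotencyClass_le.mp hno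
    omega
  -- G / γ₂ is not cyclic
  have hnc : ¬ IsCyclic (G ⧸ (⊤ : Subgroup G).lowerCentralSeries 1) := by
    intro hc
    obtain ⟨x0, hx0⟩ := hc.exists_generator
    obtain ⟨x, hx⟩ := QuotientGroup.mk'_surjective ((⊤ : Subgroup G).lowerCentralSeries 1) x0
    set π2 : G →* G ⧸ (⊤ : Subgroup G).lowerCentralSeries 2 := QuotientGroup.mk' _ with hπ2
    have hdecomp : ∀ g : G, ∃ (k : ℤ) (l : G), l ∈ (⊤ : Subgroup G).lowerCentralSeries 1 ∧ g = x ^ k * l := by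
      intro g
      obtain ⟨k, hk⟩ := hx0 (QuotientGroup.mk' ((⊤ : Subgroup G).lowerCentralSeries 1) g)
      have hk' : x0 ^ k = QuotientGroup.mk' ((⊤ : Subgroup G).lowerCentralSeries 1) g := hk
      have h1 : QuotientGroup.mk' ((⊤ : Subgroup G).lowerCentralSeries 1) ((x ^ k)⁻¹ * g) = 1 := by
        rw [map_mul, map_inv, map_zpow, hx, hk']
        group
      exact ⟨k, (x ^ k)⁻¹ * g, (QuotientGroup.eq_one_iff _).mp h1, by group⟩
    have hcenter : ∀ l ∈ (⊤ : Subgroup G).lowerCentralSeries 1, π2 l ∈ Subgroup.center (G ⧸ (⊤ : Subgroup G).lowerCentralSeries 2) := by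
      intro l hl
      rw [Subgroup.mem_center_iff]
      intro q
      obtain ⟨h, rfl⟩ := QuotientGroup.mk'_surjective ((⊤ : Subgroup G).lowerCentralSeries 2) q
      have hmem : ⁅l, h⁆ ∈ (⊤ : Subgroup G).lowerCentralSeries 2 :=
        Subgroup.commutator_mem_commutator hl (Subgroup.mem_top h)
      have h1 : π2 ⁅l, h⁆ = 1 := (QuotientGroup.eq_one_iff _).mpr hmem
      rw [map_commutatorElement, commutatorElement_eq_one_iff_mul_comm] at h1
      exact h1.symm
    haveI hcyc2 : IsCyclic ((G ⧸ (⊤ : Subgroup G).lowerCentralSeries 2) ⧸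
        Subgroup.center (G ⧸ (⊤ : Subgroup G).lowerCentralSeries 2)) := by
      constructor
      refine ⟨QuotientGroup.mk' _ (π2 x), ?_⟩
      intro q
      obtain ⟨q', rfl⟩ := QuotientGroup.mk'_surjective _ q
      obtain ⟨g, rfl⟩ := QuotientGroup.mk'_surjective ((⊤ : Subgroup G).lowerCentralSeries 2) q'
      obtain ⟨k, l, hl, rfl⟩ := hdecomp g
      refine ⟨k, ?_⟩
      set πz : (G ⧸ (⊤ : Subgroup G).lowerCentralSeries 2) →* ((G ⧸ (⊤ : Subgroup G).lowerCentralSeries 2) ⧸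
        Subgroup.center (G ⧸ (⊤ : Subgroup G).lowerCentralSeries 2)) := QuotientGroup.mk' _ with hπz
      have hz : πz (π2 l) = 1 := (QuotientGroup.eq_one_iff _).mpr (hcenter l hl)
      calc (πz (π2 x)) ^ k
          = πz ((π2 x) ^ k) := (map_zpow πz (π2 x) k).symm
        _ = πz (π2 (x ^ k)) := by rw [map_zpow π2 x k]
        _ = πz (π2 (x ^ k * l)) := by rw [map_mul, map_mul, hz, mul_one]
    have hcomm : ∀ a b : G ⧸ (⊤ : Subgroup G).lowerCentralSeries 2, a * b = b * a := by
      refine commutative_of_cyclic_center_quotient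
        (QuotientGroup.mk' (Subgroup.center (G ⧸ (⊤ : Subgroup G).lowerCentralSeries 2))) ?_
      rw [QuotientGroup.ker_mk']
    have hle : (⊤ : Subgroup G).lowerCentralSeries 1 ≤ (⊤ : Subgroup G).lowerCentralSeries 2 := by
      have h0 : (⊤ : Subgroup G).lowerCentralSeries 1 = ⁅(⊤ : Subgroup G), ⊤⁆ := rfl
      rw [h0]
      refine Subgroup.commutator_le.mpr ?_
      intro a _ b _
      have h1 : π2 ⁅a, b⁆ = 1 := by
        rw [map_commutatorElement, commutatorElement_eq_one_iff_mul_comm]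
        exact hcomm _ _
      exact (QuotientGroup.eq_one_iff _).mp h1
    exact (hstrict 1 (by omega)).not_ge hle
  -- cards of the series
  have hdl : ∀ n, Nat.card ((⊤ : Subgroup G).lowerCentralSeries n) ∣ p ^ m :=
    fun n => hcard ▸ Subgroup.card_subgroup_dvd_card _
  have hlt_card : ∀ n, n < m - 1 →
      Nat.card ((⊤ : Subgroup G).lowerCentralSeries (n+1)) < Nat.card ((⊤ : Subgroup G).lowerCentralSeries n) := by
    intro n hn
    have hlt := hstrict n hn
    by_contra hle
    push_neg at hle
    exact hlt.ne (Subgroup.eq_of_le_of_card_ge hlt.le hle)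
  have hA : ∀ k, k ≤ m - 1 → p ^ k ∣ Nat.card ((⊤ : Subgroup G).lowerCentralSeries (m - 1 - k)) := by
    intro k
    induction k with
    | zero => intro _; simpa using one_dvd _
    | succ k ih =>
      intro hk1
      have ihk := ih (by omega)
      set n := m - 1 - (k+1) with hn
      rw [(by omega : m - 1 - k = n + 1)] at ihk
      have hltc : Nat.card ((⊤ : Subgroup G).lowerCentralSeries (n+1)) < Nat.card ((⊤ : Subgroup G).lowerCentralSeries n) :=
        hlt_card n (by omega)
      obtain ⟨a, _, hca⟩ := (Nat.dvd_prime_pow hp).mp (hdl n)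
      obtain ⟨b, _, hcb⟩ := (Nat.dvd_prime_pow hp).mp (hdl (n+1))
      rw [hca]
      rw [hca, hcb] at hltc
      rw [hcb] at ihk
      have hkb : k ≤ b := (Nat.pow_dvd_pow_iff_le_right hp1).mp ihk
      have hba : b < a := (Nat.pow_lt_pow_iff_right hp1).mp hltc
      exact pow_dvd_pow p (by omega)
  have hcard1 : Nat.card ((⊤ : Subgroup G).lowerCentralSeries 1) = p ^ (m - 2) := by
    have hAd : p ^ (m - 2) ∣ Nat.card ((⊤ : Subgroup G).lowerCentralSeries 1) := by
      have h0 := hA (m - 2) (by omega)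
      rwa [(by omega : m - 1 - (m - 2) = 1)] at h0
    obtain ⟨e, _, hce⟩ := (Nat.dvd_prime_pow hp).mp (hdl 1)
    have heb : m - 2 ≤ e := by
      rw [hce] at hAd
      exact (Nat.pow_dvd_pow_iff_le_right hp1).mp hAd
    have hem : e ≤ m := (Nat.pow_dvd_pow_iff_le_right hp1).mp (hce ▸ hdl 1)
    have hlt0 : (⊤ : Subgroup G).lowerCentralSeries 1 < ⊤ := by
      have h0 := hstrict 0 (by omega)
      rwa [Subgroup.lowerCentralSeries_zero] at h0
    have hne_top : e ≠ m := by
      intro h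
      exact hlt0.ne (Subgroup.eq_top_of_card_eq _ (by rw [hce, h, hcard]))
    have hquot : Nat.card (G ⧸ (⊤ : Subgroup G).lowerCentralSeries 1) * p ^ e = p ^ m := by
      rw [← hce, ← hcard]
      exact (Subgroup.card_eq_card_quotient_mul_card_subgroup _).symm
    have hne1 : e ≠ m - 1 := by
      intro h
      have hq : Nat.card (G ⧸ (⊤ : Subgroup G).lowerCentralSeries 1) = p := by
        have hpow : p ^ m = p * p ^ (m-1) := by
          rw [← pow_succ']
          congr 1
          omega
        rw [h] at hquot
        exact Nat.eq_of_mul_eq_mul_right (pow_pos (by omega) _) (hquot.trans hpow)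
      haveI := Fact.mk hp
      exact hnc (isCyclic_of_prime_card hq)
    rw [hce]
    congr 1
    omega
  have hcard2 : Nat.card ((⊤ : Subgroup G).lowerCentralSeries 2) = p ^ (m - 3) := by
    have hAd : p ^ (m - 3) ∣ Nat.card ((⊤ : Subgroup G).lowerCentralSeries 2) := by
      have h0 := hA (m - 3) (by omega)
      rwa [(by omega : m - 1 - (m - 3) = 2)] at h0
    obtain ⟨e, _, hce⟩ := (Nat.dvd_prime_pow hp).mp (hdl 2)
    have heb : m - 3 ≤ e := by
      rw [hce] at hAd
      exact (Nat.pow_dvd_pow_iff_le_right hp1).mp hAd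
    have hltc := hlt_card 1 (by omega)
    rw [hce, hcard1] at hltc
    have : e < m - 2 := (Nat.pow_lt_pow_iff_right hp1).mp hltc
    rw [hce]
    congr 1
    omega
  have hcard3 : Nat.card ((⊤ : Subgroup G).lowerCentralSeries 3) = p ^ (m - 4) := by
    have hAd : p ^ (m - 4) ∣ Nat.card ((⊤ : Subgroup G).lowerCentralSeries 3) := by
      have h0 := hA (m - 4) (by omega)
      rwa [(by omega : m - 1 - (m - 4) = 3)] at h0
    obtain ⟨e, _, hce⟩ := (Nat.dvd_prime_pow hp).mp (hdl 3)
    have heb : m - 4 ≤ e := by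
      rw [hce] at hAd
      exact (Nat.pow_dvd_pow_iff_le_right hp1).mp hAd
    have hltc := hlt_card 2 (by omega)
    rw [hce, hcard2] at hltc
    have : e < m - 3 := (Nat.pow_lt_pow_iff_right hp1).mp hltc
    rw [hce]
    congr 1
    omega
  -- exponent of G/γ₂ is p
  have hq1card : Nat.card (G ⧸ (⊤ : Subgroup G).lowerCentralSeries 1) = p ^ 2 := by
    have h := Subgroup.card_eq_card_quotient_mul_card_subgroup ((⊤ : Subgroup G).lowerCentralSeries 1)
    rw [hcard, hcard1] at h
    have hpow : p ^ m = p ^ 2 * p ^ (m-2) := by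
      rw [← pow_add]
      congr 1
      omega
    exact Nat.eq_of_mul_eq_mul_right (pow_pos (by omega) _) (h.symm.trans hpow)
  have hGpow : ∀ g : G, g ^ p ∈ (⊤ : Subgroup G).lowerCentralSeries 1 := by
    intro g
    set q : G ⧸ (⊤ : Subgroup G).lowerCentralSeries 1 := QuotientGroup.mk' _ g with hq
    have hod : orderOf q ∣ p ^ 2 := hq1card ▸ orderOf_dvd_natCard q
    obtain ⟨j, hj2, hoj⟩ := (Nat.dvd_prime_pow hp).mp hod
    have hj : j ≤ 1 := by
      by_contra hj1
      have hj2' : j = 2 := by omega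
      have ho : orderOf q = Nat.card (G ⧸ (⊤ : Subgroup G).lowerCentralSeries 1) := by
        rw [hoj, hj2', hq1card]
      exact hnc (isCyclic_of_orderOf_eq_card q ho)
    have hqp : q ^ p = 1 := by
      refine orderOf_dvd_iff_pow_eq_one.mp ?_
      rw [hoj]
      calc p ^ j ∣ p ^ 1 := pow_dvd_pow p hj
        _ = p := pow_one p
    have h1 : QuotientGroup.mk' ((⊤ : Subgroup G).lowerCentralSeries 1) (g ^ p) = 1 := by
      rw [map_pow]; exact hqp
    exact (QuotientGroup.eq_one_iff _).mp h1
  -- pass to R = G / γ₄, a group of order p⁴ and maximal class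
  set ρ : G →* G ⧸ (⊤ : Subgroup G).lowerCentralSeries 3 := QuotientGroup.mk' _ with hρdef
  have hρs : Surjective ρ := QuotientGroup.mk'_surjective _
  have hcardR : Nat.card (G ⧸ (⊤ : Subgroup G).lowerCentralSeries 3) = p ^ 4 := by
    have h := Subgroup.card_eq_card_quotient_mul_card_subgroup ((⊤ : Subgroup G).lowerCentralSeries 3)
    rw [hcard, hcard3] at h
    have hpow : p ^ m = p ^ 4 * p ^ (m-4) := by
      rw [← pow_add]
      congr 1
      omega
    exact Nat.eq_of_mul_eq_mul_right (pow_pos (by omega) _) (h.symm.trans hpow)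
  have hR1 : Nat.card ((⊤ : Subgroup (G ⧸ (⊤ : Subgroup G).lowerCentralSeries 3)).lowerCentralSeries 1) = p ^ 2 := by
    rw [← lcs_map_eq ρ hρs 1]
    have h := card_map_mk' ((⊤ : Subgroup G).lowerCentralSeries 3) ((⊤ : Subgroup G).lowerCentralSeries 1)
      (Subgroup.lowerCentralSeries_antitone _ (by omega))
    rw [hcard1, hcard3] at h
    have hpow : p ^ (m-2) = p ^ 2 * p ^ (m-4) := by
      rw [← pow_add]
      congr 1
      omega
    exact Nat.eq_of_mul_eq_mul_right (pow_pos (by omega) _) (h.trans hpow)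
  have hR2 : Nat.card ((⊤ : Subgroup (G ⧸ (⊤ : Subgroup G).lowerCentralSeries 3)).lowerCentralSeries 2) = p := by
    rw [← lcs_map_eq ρ hρs 2]
    have h := card_map_mk' ((⊤ : Subgroup G).lowerCentralSeries 3) ((⊤ : Subgroup G).lowerCentralSeries 2)
      (Subgroup.lowerCentralSeries_antitone _ (by omega))
    rw [hcard2, hcard3] at h
    have hpow : p ^ (m-3) = p * p ^ (m-4) := by
      rw [← pow_succ']
      congr 1
      omega
    exact Nat.eq_of_mul_eq_mul_right (pow_pos (by omega) _) (h.trans hpow)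
  have hR3 : (⊤ : Subgroup (G ⧸ (⊤ : Subgroup G).lowerCentralSeries 3)).lowerCentralSeries 3 = ⊥ := by
    rw [← lcs_map_eq ρ hρs 3, Subgroup.map_eq_bot_iff, hρdef, QuotientGroup.ker_mk']
  have hRpow : ∀ r : G ⧸ (⊤ : Subgroup G).lowerCentralSeries 3, r ^ p ∈
      (⊤ : Subgroup (G ⧸ (⊤ : Subgroup G).lowerCentralSeries 3)).lowerCentralSeries 1 := by
    intro r
    obtain ⟨g, rfl⟩ := hρs r
    rw [← map_pow, ← lcs_map_eq ρ hρs 1]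
    exact ⟨g ^ p, hGpow g, rfl⟩
  have hcore := core p hp hp3 hcardR hR1 hR2 hR3 hRpow
  have h32 : (⊤ : Subgroup G).lowerCentralSeries 3 ≤ (⊤ : Subgroup G).lowerCentralSeries 2 :=
    Subgroup.lowerCentralSeries_antitone _ (by omega)
  have heq2 : (⊤ : Subgroup (G ⧸ (⊤ : Subgroup G).lowerCentralSeries 3)).lowerCentralSeries 2 =
      ((⊤ : Subgroup G).lowerCentralSeries 2).map (QuotientGroup.mk' ((⊤ : Subgroup G).lowerCentralSeries 3)) :=
    (lcs_map_eq ρ hρs 2).symm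
  have hequiv : ((G ⧸ (⊤ : Subgroup G).lowerCentralSeries 3) ⧸
      (⊤ : Subgroup (G ⧸ (⊤ : Subgroup G).lowerCentralSeries 3)).lowerCentralSeries 2) ≃* (G ⧸ (⊤ : Subgroup G).lowerCentralSeries 2) :=
    (QuotientGroup.quotientMulEquivOfEq heq2).trans
      (QuotientGroup.quotientQuotientEquivQuotient ((⊤ : Subgroup G).lowerCentralSeries 3)
        ((⊤ : Subgroup G).lowerCentralSeries 2) h32)
  rw [← Monoid.exponent_eq_of_mulEquiv hequiv]
  exact hcore
end

section
/- Let G be a group, N a normal subgroup of G. Then the group of derivations (crossed homomorphisms) Z^1(G/N, Z(N)), with G/N acting on Z(N) by conjugation, is isomorphic to the group Aut_N^N(G) of automorphisms of G that normalize N, act trivially on G/N, and act trivially on N, via the map sending a derivation γ to the automorphism g ↦ g·γ(Ng). -/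
private def mkAut {G : Type*} [Group G] (N : Subgroup G) (hN : N.Normal)
    (γ : G → G) (hmem : ∀ g, γ g ∈ N)
    (hconst : ∀ g : G, ∀ m ∈ N, γ (m * g) = γ g)
    (hcoc : ∀ g₁ g₂ : G, γ (g₁ * g₂) = g₂⁻¹ * γ g₁ * g₂ * γ g₂) : MulAut G where
  toFun g := g * γ g
  invFun g := g * (γ g)⁻¹
  left_inv g := by
    have h : γ (g * γ g) = γ g := by
      have e : g * γ g = (g * γ g * g⁻¹) * g := by group
      rw [e, hconst g _ (hN.conj_mem _ (hmem g) g)]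
    simp only [h]; group
  right_inv g := by
    have h : γ (g * (γ g)⁻¹) = γ g := by
      have e : g * (γ g)⁻¹ = (g * (γ g)⁻¹ * g⁻¹) * g := by group
      rw [e, hconst g _ (hN.conj_mem _ (inv_mem (hmem g)) g)]
    simp only [h]; group
  map_mul' g₁ g₂ := by
    show g₁ * g₂ * γ (g₁ * g₂) = (g₁ * γ g₁) * (g₂ * γ g₂)
    rw [hcoc]; group

private theorem mkAut_apply {G : Type*} [Group G] (N : Subgroup G) (hN : N.Normal)
    (γ : G → G) (hmem : ∀ g, γ g ∈ N)
    (hconst : ∀ g : G, ∀ m ∈ N, γ (m * g) = γ g)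
    (hcoc : ∀ g₁ g₂ : G, γ (g₁ * g₂) = g₂⁻¹ * γ g₁ * g₂ * γ g₂) (g : G) :
    mkAut N hN γ hmem hconst hcoc g = g * γ g := rfl

/-- For `N ⊴ G`, the group `Z¹(G/N, Z(N))` of derivations (with `G/N` acting on `Z(N)`
by conjugation) is naturally isomorphic to `Aut_N^N(G)`, the group of automorphisms of
`G` fixing `N` elementwise and acting trivially on `G/N`, via `γ ↦ (g ↦ g·γ(Ng))`.
A derivation is encoded as a function `γ : G → G` with values in `Z(N)`, constant on
cosets of `N`, satisfying the cocycle identity `γ(xy) = γ(x)^y γ(y)`; the isomorphism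
is encoded as a bijection that intertwines the (pointwise) products. -/
theorem stmt_8 {G : Type*} [Group G] (N : Subgroup G) (hN : N.Normal) :
    ∃ e : {γ : G → G // (∀ g, γ g ∈ N ⊓ Subgroup.centralizer (N : Set G)) ∧
        (∀ g : G, ∀ m ∈ N, γ (m * g) = γ g) ∧
        (∀ g₁ g₂ : G, γ (g₁ * g₂) = g₂⁻¹ * γ g₁ * g₂ * γ g₂)} ≃
      {φ : MulAut G // (∀ m ∈ N, φ m = m) ∧ ∀ g : G, g⁻¹ * φ g ∈ N},
      (∀ γ, ∀ g : G, (e γ : MulAut G) g = g * γ.val g) ∧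
      (∀ γ₁ γ₂, ∀ g : G,
        ((e γ₁ : MulAut G) * (e γ₂ : MulAut G)) g = g * (γ₁.val g * γ₂.val g)) := by
  classical
  refine ⟨Equiv.mk
      (fun γ => ⟨mkAut N hN γ.val (fun g => (γ.prop.1 g).1) γ.prop.2.1 γ.prop.2.2, ?_, ?_⟩)
      (fun φ => ⟨fun g => g⁻¹ * φ.val g, ?_, ?_, ?_⟩) ?_ ?_, ?_, ?_⟩
  · -- fixes N pointwise
    intro m hm
    obtain ⟨γ, hmem, hconst, hcoc⟩ := γ
    have h1 : γ 1 = 1 := by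
      have h := hcoc 1 1
      simp only [one_mul, inv_one, mul_one] at h
      exact (left_eq_mul.mp h)
    have hm1 : γ m = 1 := by
      have := hconst 1 m hm
      simpa [h1] using this
    simp [mkAut_apply, hm1]
  · -- acts trivially on G/N
    intro g
    obtain ⟨γ, hmem, hconst, hcoc⟩ := γ
    simp only [mkAut_apply]
    simpa [mul_assoc] using (hmem g).1
  · -- invFun: membership in N ⊓ centralizer
    intro g
    refine ⟨φ.prop.2 g, ?_⟩
    show g⁻¹ * φ.val g ∈ Subgroup.centralizer (N : Set G)
    rw [Subgroup.mem_centralizer_iff]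
    intro n hn
    have hn' : n ∈ N := hn
    have key : φ.val g * n = g * n * g⁻¹ * φ.val g := by
      have h1 : φ.val (g * n) = φ.val g * n := by
        rw [map_mul, φ.prop.1 n hn']
      have h2 : (g * n : G) = (g * n * g⁻¹) * g := by group
      have h3 : φ.val (g * n) = g * n * g⁻¹ * φ.val g := by
        rw [h2, map_mul, φ.prop.1 _ (hN.conj_mem n hn' g)]; group
      rw [← h1, h3]
    have h4 : g⁻¹ * (φ.val g * n) = g⁻¹ * (g * n * g⁻¹ * φ.val g) := by rw [key]
    calc n * (g⁻¹ * φ.val g) = g⁻¹ * (g * n * g⁻¹ * φ.val g) := by group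
      _ = g⁻¹ * (φ.val g * n) := h4.symm
      _ = g⁻¹ * φ.val g * n := by group
  · -- invFun: constancy
    intro g m hm
    show (m * g)⁻¹ * φ.val (m * g) = g⁻¹ * φ.val g
    rw [map_mul, φ.prop.1 m hm]; group
  · -- invFun: cocycle
    intro g₁ g₂
    show (g₁ * g₂)⁻¹ * φ.val (g₁ * g₂) =
      g₂⁻¹ * (g₁⁻¹ * φ.val g₁) * g₂ * (g₂⁻¹ * φ.val g₂)
    rw [map_mul]; group
  · -- left_inv
    intro γ
    apply Subtype.ext
    funext g
    simp [mkAut_apply]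
  · -- right_inv
    intro φ
    apply Subtype.ext
    ext g
    simp [mkAut_apply]
  · -- first property
    intro γ g
    rfl
  · -- mult property
    intro γ₁ γ₂ g
    show (mkAut N hN γ₁.val (fun g => (γ₁.prop.1 g).1) γ₁.prop.2.1 γ₁.prop.2.2)
        ((mkAut N hN γ₂.val (fun g => (γ₂.prop.1 g).1) γ₂.prop.2.1 γ₂.prop.2.2) g) =
        g * (γ₁.val g * γ₂.val g)
    rw [mkAut_apply, mkAut_apply]
    have hc : γ₁.val (g * γ₂.val g) = γ₁.val g := by
      have e : g * γ₂.val g = (g * γ₂.val g * g⁻¹) * g := by group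
      rw [e, γ₁.prop.2.1 g _ (hN.conj_mem _ (γ₂.prop.1 g).1 g)]
    rw [hc]
    have hcomm : γ₂.val g * γ₁.val g = γ₁.val g * γ₂.val g :=
      Subgroup.mem_centralizer_iff.mp (γ₁.prop.1 g).2 (γ₂.val g) (γ₂.prop.1 g).1
    rw [mul_assoc, hcomm]
end

section
/- Let G be a group and N a normal subgroup of G. If γ : G/N → Z(N) is a derivation with respect to the conjugation action, then the map φ : G → G defined by φ(g) = g·γ(Ng) is an automorphism of G fixing N elementwise and inducing the identity on G/N. -/
/-- If `N ⊴ G` and `γ : G/N → Z(N)` is a derivation for the conjugation action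
(encoded as a function `γ : G → G` with values in `Z(N)`, constant on cosets of `N`,
with `γ(xy) = γ(x)^y γ(y)`), then `g ↦ g·γ(Ng)` is an automorphism of `G` fixing `N`
elementwise and inducing the identity on `G/N`. -/
theorem stmt_9 {G : Type*} [Group G] (N : Subgroup G) (hN : N.Normal) (γ : G → G)
    (hval : ∀ g, γ g ∈ N ⊓ Subgroup.centralizer (N : Set G))
    (hcoset : ∀ g : G, ∀ m ∈ N, γ (m * g) = γ g)
    (hcocycle : ∀ g₁ g₂ : G, γ (g₁ * g₂) = g₂⁻¹ * γ g₁ * g₂ * γ g₂) :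
    ∃ φ : G ≃* G, (∀ g : G, φ g = g * γ g) ∧ (∀ m ∈ N, φ m = m) ∧
      (∀ g : G, g⁻¹ * φ g ∈ N) := by
  have hmemN : ∀ g, γ g ∈ N := fun g => (hval g).1
  have hone : γ 1 = 1 := by simpa using hcocycle 1 1
  have hright : ∀ g : G, ∀ n ∈ N, γ (g * n) = γ g := by
    intro g n hn
    have h1 : g * n = (g * n * g⁻¹) * g := by group
    rw [h1, hcoset g _ (hN.conj_mem n hn g)]
  have key : ∀ g : G, γ (g * γ g) = γ g := fun g => hright g _ (hmemN g)
  have key2 : ∀ g : G, γ (g * (γ g)⁻¹) = γ g := fun g =>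
    hright g _ (N.inv_mem (hmemN g))
  refine ⟨{ toFun := fun g => g * γ g
            invFun := fun g => g * (γ g)⁻¹
            left_inv := ?_
            right_inv := ?_
            map_mul' := ?_ }, fun g => rfl, ?_, ?_⟩
  · intro g
    simp only [key g]
    group
  · intro g
    simp only [key2 g]
    group
  · intro g₁ g₂
    simp only [hcocycle g₁ g₂]
    group
  · intro m hm
    have : γ m = γ 1 := by
      have := hcoset 1 m hm
      simpa using this
    simp [this, hone]
  · intro g
    simpa using hmemN g
end

section
/- Let G be a group, N a normal subgroup with Z(N) of exponent p. Then every nontrivial derivation γ : G/N → Z(N) gives rise via φ(g) = g·γ(Ng) to an automorphism of G of order p. -/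
/-- If `N ⊴ G` with `Z(N)` of exponent `p`, then every nontrivial derivation
`γ : G/N → Z(N)` (encoded as a function `γ : G → G` with values in `Z(N)`, constant
on cosets of `N`, satisfying the cocycle identity) yields, via `φ(g) = g·γ(Ng)`, an
automorphism of `G` of order `p`. -/
theorem stmt_10 {G : Type*} [Group G] (N : Subgroup G) (hN : N.Normal)
    (p : ℕ) (hp : p.Prime)
    (hexp : ∀ z ∈ N ⊓ Subgroup.centralizer (N : Set G), z ^ p = 1)
    (γ : G → G)
    (hval : ∀ g, γ g ∈ N ⊓ Subgroup.centralizer (N : Set G))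
    (hcoset : ∀ g : G, ∀ m ∈ N, γ (m * g) = γ g)
    (hcocycle : ∀ g₁ g₂ : G, γ (g₁ * g₂) = g₂⁻¹ * γ g₁ * g₂ * γ g₂)
    (hnontriv : ∃ g : G, γ g ≠ 1) :
    ∃ φ : G ≃* G, (∀ g : G, φ g = g * γ g) ∧ orderOf φ = p := by
  have hγN : ∀ g, γ g ∈ N := fun g => (hval g).1
  have hright : ∀ g : G, ∀ n ∈ N, γ (g * n) = γ g := by
    intro g n hn
    have h : g * n = (g * n * g⁻¹) * g := by group
    rw [h, hcoset g _ (hN.conj_mem n hn g)]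
  refine ⟨{ toFun := fun g => g * γ g
            invFun := fun g => g * (γ g)⁻¹
            left_inv := ?_
            right_inv := ?_
            map_mul' := ?_ }, fun g => rfl, ?_⟩
  · intro g
    simp only
    rw [hright g _ (hγN g)]
    group
  · intro g
    simp only
    rw [hright g _ (inv_mem (hγN g))]
    group
  · intro a b
    rw [hcocycle]
    group
  · set φ : G ≃* G :=
      { toFun := fun g => g * γ g
        invFun := fun g => g * (γ g)⁻¹
        left_inv := by
          intro g
          simp only
          rw [hright g _ (hγN g)]
          group
        right_inv := by
          intro g
          simp only
          rw [hright g _ (inv_mem (hγN g))]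
          group
        map_mul' := by
          intro a b
          rw [hcocycle]
          group } with hφdef
    have happ : ∀ g : G, φ g = g * γ g := fun g => rfl
    have hpow : ∀ (k : ℕ) (g : G), (φ ^ k) g = g * (γ g) ^ k := by
      intro k
      induction k with
      | zero => intro g; simp
      | succ k ih =>
        intro g
        rw [pow_succ']
        have : (φ * φ ^ k) g = φ ((φ ^ k) g) := rfl
        rw [this, ih g, happ, hright g _ (pow_mem (hγN g) k)]
        rw [pow_succ]
        group
    haveI : Fact p.Prime := ⟨hp⟩
    refine orderOf_eq_prime ?_ ?_
    · ext g
      have : (φ ^ p) g = g * (γ g) ^ p := hpow p g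
      rw [this, hexp _ (hval g), mul_one]
      rfl
    · obtain ⟨g, hg⟩ := hnontriv
      intro h
      apply hg
      have : φ g = g := by rw [h]; rfl
      rw [happ g] at this
      exact (mul_eq_left).mp this
end

section
/- Let G be a finite purely nonabelian p-group. Then the order of the group of central automorphisms Aut_c(G) equals the order of Hom(G, Z(G)). -/
open Subgroup

lemma exists_complement_of_height {A : Type*} [CommGroup A] [Finite A] {p h : ℕ}
    (hp : p.Prime) {a : A} (ha : orderOf a = p ^ (h + 1))
    (hs : ∀ u : A, u ^ p ^ (h + 1) ≠ a ^ p ^ h) :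
    ∃ B : Subgroup A, Subgroup.zpowers a ⊓ B = ⊥ ∧ Subgroup.zpowers a ⊔ B = ⊤ := by
  set n := p ^ (h + 1) with hn
  have hn0 : n ≠ 0 := pow_ne_zero _ hp.pos.ne'
  set V : Subgroup A := (powMonoidHom n : A →* A).range with hV
  set s : A := a ^ p ^ h with hsdef
  have hsV : s ∉ V := by
    rintro ⟨u, hu⟩
    exact hs u hu
  -- quotient
  have hsQ : (QuotientGroup.mk s : A ⧸ V) ≠ 1 := by
    rw [ne_eq, QuotientGroup.eq_one_iff]
    exact hsV
  haveI : NeZero ((Monoid.exponent (A ⧸ V) : ℂ)) :=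
    ⟨Nat.cast_ne_zero.mpr Monoid.exponent_ne_zero_of_finite⟩
  obtain ⟨χ, hχ⟩ := CommGroup.exists_apply_ne_one_of_hasEnoughRootsOfUnity (A ⧸ V) ℂ hsQ
  set ψ : A →* ℂˣ := χ.comp (QuotientGroup.mk' V) with hψ
  have hψn : ∀ x : A, ψ x ^ n = 1 := by
    intro x
    have hx : (QuotientGroup.mk (x ^ n) : A ⧸ V) = 1 :=
      (QuotientGroup.eq_one_iff _).mpr ⟨x, rfl⟩
    calc ψ x ^ n = χ (QuotientGroup.mk (x ^ n)) := by
          simp [hψ, map_pow]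
      _ = 1 := by rw [hx, map_one]
  have hψs : ψ a ^ p ^ h ≠ 1 := by
    have : ψ a ^ p ^ h = χ (QuotientGroup.mk s) := by simp [hψ, hsdef, map_pow]
    rw [this]; exact hχ
  set z : ℂˣ := ψ a with hz
  have hzord : orderOf z = n := by
    have hdvd : orderOf z ∣ n := orderOf_dvd_of_pow_eq_one (hψn a)
    obtain ⟨j, hj, hje⟩ := (Nat.dvd_prime_pow hp).mp hdvd
    rcases Nat.lt_or_ge j (h + 1) with hlt | hge
    · exfalso
      apply hψs
      apply orderOf_dvd_iff_pow_eq_one.mp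
      rw [hje]
      exact pow_dvd_pow p (Nat.lt_succ_iff.mp hlt)
    · rw [hje]; rw [hn]; congr 1; omega
  haveI : NeZero n := ⟨hn0⟩
  haveI : NeZero ((n : ℂ)) := ⟨Nat.cast_ne_zero.mpr hn0⟩
  have hle : Subgroup.zpowers z ≤ rootsOfUnity n ℂ := by
    rintro t ⟨k, rfl⟩
    simp only [mem_rootsOfUnity]
    rw [← zpow_natCast, ← zpow_mul, mul_comm, zpow_mul, zpow_natCast, hψn a, one_zpow]
  have hZeq : Subgroup.zpowers z = rootsOfUnity n ℂ := by
    apply Subgroup.eq_of_le_of_card_ge hle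
    rw [HasEnoughRootsOfUnity.natCard_rootsOfUnity ℂ n, Nat.card_zpowers, hzord]
  have key : ∀ x : A, ψ x ∈ Subgroup.zpowers z := by
    intro x
    rw [hZeq, mem_rootsOfUnity]
    exact hψn x
  refine ⟨ψ.ker, ?_, ?_⟩
  · rw [eq_bot_iff]
    rintro x ⟨⟨k, rfl⟩, hker⟩
    have : z ^ k = 1 := by
      have := MonoidHom.mem_ker.mp hker
      rw [← this, hz, map_zpow]
    have hdvd : (n : ℤ) ∣ k := by
      rw [← hzord]; exact orderOf_dvd_iff_zpow_eq_one.mpr this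
    have : a ^ k = 1 := orderOf_dvd_iff_zpow_eq_one.mp (ha ▸ hdvd)
    simp [this, Subgroup.mem_bot]
  · rw [eq_top_iff]
    intro x _
    obtain ⟨k, hk⟩ := Subgroup.mem_zpowers_iff.mp (key x)
    have h1 : a ^ k ∈ Subgroup.zpowers a ⊔ ψ.ker :=
      Subgroup.mem_sup_left (Subgroup.zpow_mem _ (Subgroup.mem_zpowers a) k)
    have h2 : (a ^ k)⁻¹ * x ∈ Subgroup.zpowers a ⊔ ψ.ker := by
      apply Subgroup.mem_sup_right
      rw [MonoidHom.mem_ker, map_mul, map_inv, map_zpow, hk]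
      simp
    simpa using Subgroup.mul_mem _ h1 h2

lemma orderOf_eq_pow_succ {H : Type*} [Group H] {p : ℕ} (hp : p.Prime) {w : H} {h : ℕ}
    (h1 : w ^ p ^ (h + 1) = 1) (h2 : w ^ p ^ h ≠ 1) : orderOf w = p ^ (h + 1) := by
  have hdvd : orderOf w ∣ p ^ (h + 1) := orderOf_dvd_of_pow_eq_one h1
  obtain ⟨j, hj, hje⟩ := (Nat.dvd_prime_pow hp).mp hdvd
  rcases Nat.lt_or_ge j (h + 1) with hlt | hge
  · exact absurd (orderOf_dvd_iff_pow_eq_one.mp (hje ▸ pow_dvd_pow p (Nat.lt_succ_iff.mp hlt)))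
      h2
  · rw [hje]; congr 1; omega

open scoped IsMulCommutative in
lemma sigma_inj {G : Type*} [Group G] [Finite G] {p : ℕ} [hp : Fact p.Prime]
    (hG : IsPGroup p G)
    (hpna : ¬ ∃ A B : Subgroup G, A ≠ ⊥ ∧ (∀ a ∈ A, ∀ a' ∈ A, a * a' = a' * a) ∧
      A ⊓ B = ⊥ ∧ A ⊔ B = ⊤ ∧ (∀ a ∈ A, ∀ b ∈ B, a * b = b * a))
    (f : G →* Subgroup.center G) {x : G} (hx : x * (f x : G) = 1) : x = 1 := by
  by_contra hx1
  have hfx : (f x : G) = x⁻¹ := eq_inv_of_mul_eq_one_right hx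
  -- order of x
  obtain ⟨m, hm⟩ := hG x
  have hodvd : orderOf x ∣ p ^ m := orderOf_dvd_of_pow_eq_one hm
  obtain ⟨j, hjm, hje⟩ := (Nat.dvd_prime_pow hp.out).mp hodvd
  have hj1 : 1 ≤ j := by
    rcases Nat.eq_zero_or_pos j with h0 | h
    · exfalso; apply hx1
      have : orderOf x = 1 := by rw [hje, h0, pow_zero]
      exact orderOf_eq_one_iff.mp this
    · exact h
  set s : G := x ^ p ^ (j - 1) with hsdef
  have hs_ne : s ≠ 1 := by
    intro hcon
    have := orderOf_dvd_of_pow_eq_one hcon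
    rw [hje] at this
    exact absurd (Nat.pow_dvd_pow_iff_le_right hp.out.one_lt |>.mp this) (by omega)
  have hsp : s ^ p = 1 := by
    rw [hsdef, ← pow_mul, ← pow_succ, Nat.sub_add_cancel hj1, ← hje, pow_orderOf_eq_one]
  have hfs : (f s : G) = s⁻¹ := by
    rw [hsdef, map_pow]
    push_cast [hfx]
    rw [inv_pow]
  -- abelianization
  haveI : Finite (Abelianization G) := inferInstanceAs (Finite (G ⧸ commutator G))
  set π : G →* Abelianization G := Abelianization.of with hπ
  have hπsurj : Function.Surjective π := fun y => Quotient.inductionOn' y fun g => ⟨g, rfl⟩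
  set F : Abelianization G →* Subgroup.center G := Abelianization.lift f with hF
  have hFof : ∀ g : G, F (π g) = f g := fun g => Abelianization.lift_apply_of f g
  have hπs : π s ≠ 1 := by
    intro hcon
    have : f s = 1 := by rw [← hFof, hcon, map_one]
    apply hs_ne
    have := congrArg (fun t : Subgroup.center G => (t : G)) this
    simp only [hfs] at this
    simpa using inv_injective (by simpa using this)
  -- p-group bound on abelianization
  have hGab : IsPGroup p (Abelianization G) := hG.of_surjective π hπsurj
  obtain ⟨k, hk⟩ := IsPGroup.iff_card.mp hGab
  have hbound : ∀ c : Abelianization G, c ^ p ^ k = 1 := by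
    intro c
    rw [← hk]
    exact pow_card_eq_one'
  classical
  set P : ℕ → Prop := fun jj => ∃ c : Abelianization G, c ^ p ^ jj = π s with hP
  have hP0 : P 0 := ⟨π s, by simp⟩
  have hPle : ∀ jj, P jj → jj ≤ k := by
    rintro jj ⟨c, hc⟩
    by_contra hcon
    apply hπs
    rw [← hc]
    have : (p : ℕ) ^ k ∣ p ^ jj := pow_dvd_pow p (by omega)
    obtain ⟨d, hd⟩ := this
    rw [hd, pow_mul, hbound, one_pow]
  set h : ℕ := Nat.findGreatest P k with hh
  have hPh : P h := Nat.findGreatest_spec (Nat.zero_le k) hP0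
  have hmax : ¬ P (h + 1) := by
    intro hcon
    have := Nat.le_findGreatest (hPle _ hcon) hcon
    omega
  obtain ⟨c, hc⟩ := hPh
  obtain ⟨y, rfl⟩ := hπsurj c
  -- the central element w
  set w : G := (f y : G) with hw
  have hwcen : w ∈ Subgroup.center G := (f y).2
  have hwph : w ^ p ^ h = s⁻¹ := by
    have : (f y) ^ p ^ h = f s := by
      rw [← hFof y, ← map_pow, hc, hFof]
    calc w ^ p ^ h = ((f y ^ p ^ h : Subgroup.center G) : G) := by rw [hw]; norm_cast
      _ = ((f s : Subgroup.center G) : G) := by rw [this]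
      _ = s⁻¹ := hfs
  have hwph_ne : w ^ p ^ h ≠ 1 := by rw [hwph]; simpa using hs_ne
  have hwp1 : w ^ p ^ (h + 1) = 1 := by
    rw [pow_succ, pow_mul, hwph, inv_pow, hsp, inv_one]
  have hword : orderOf w = p ^ (h + 1) := orderOf_eq_pow_succ hp.out hwp1 hwph_ne
  -- image in abelianization
  have hπwph : (π w) ^ p ^ h = (π s)⁻¹ := by rw [← map_pow, hwph, map_inv]
  have hπword : orderOf (π w) = p ^ (h + 1) := by
    apply orderOf_eq_pow_succ hp.out
    · rw [← map_pow, hwp1, map_one]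
    · rw [hπwph]; simpa using hπs
  -- height condition
  have hheight : ∀ u : Abelianization G, u ^ p ^ (h + 1) ≠ (π w) ^ p ^ h := by
    intro u hcon
    apply hmax
    refine ⟨u⁻¹, ?_⟩
    rw [inv_pow, hcon, hπwph, inv_inv]
  obtain ⟨Bbar, hinf, hsup⟩ := exists_complement_of_height hp.out hπword hheight
  -- build the direct factor decomposition of G
  apply hpna
  refine ⟨Subgroup.zpowers w, Bbar.comap π, ?_, ?_, ?_, ?_, ?_⟩
  · intro hcon
    apply hwph_ne
    have : w = 1 := by
      have := hcon ▸ Subgroup.mem_zpowers w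
      simpa using this
    rw [this, one_pow]
  · rintro a ha a' ha'
    have h1 : a ∈ Subgroup.center G := Subgroup.zpowers_le.mpr hwcen ha
    exact (Subgroup.mem_center_iff.mp h1 a').symm
  · rw [eq_bot_iff]
    rintro g ⟨hg1, hg2⟩
    obtain ⟨kk, rfl⟩ := Subgroup.mem_zpowers_iff.mp hg1
    have hπmem : (π w) ^ kk ∈ Subgroup.zpowers (π w) ⊓ Bbar := by
      constructor
      · exact Subgroup.zpow_mem _ (Subgroup.mem_zpowers _) kk
      · simpa [map_zpow] using hg2
    rw [hinf] at hπmem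
    have h1 : (π w) ^ kk = 1 := by simpa using hπmem
    have hdvd : ((p ^ (h + 1) : ℕ) : ℤ) ∣ kk := by
      rw [← hπword]
      exact orderOf_dvd_iff_zpow_eq_one.mpr h1
    have : w ^ kk = 1 := orderOf_dvd_iff_zpow_eq_one.mp (hword ▸ hdvd)
    simpa using this
  · rw [eq_top_iff]
    intro g _
    have : π g ∈ Subgroup.zpowers (π w) ⊔ Bbar := by rw [hsup]; trivial
    obtain ⟨u, hu, b, hb, hub⟩ := Subgroup.mem_sup.mp this
    obtain ⟨kk, rfl⟩ := Subgroup.mem_zpowers_iff.mp hu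
    have h1 : w ^ kk ∈ Subgroup.zpowers w ⊔ Bbar.comap π :=
      Subgroup.mem_sup_left (Subgroup.zpow_mem _ (Subgroup.mem_zpowers _) kk)
    have h2 : (w ^ kk)⁻¹ * g ∈ Subgroup.zpowers w ⊔ Bbar.comap π := by
      apply Subgroup.mem_sup_right
      have : π ((w ^ kk)⁻¹ * g) = b := by
        rw [map_mul, map_inv, map_zpow, ← hub]
        group
      simpa [Subgroup.mem_comap, this] using hb
    simpa using Subgroup.mul_mem _ h1 h2
  · rintro a ha b hb
    have h1 : a ∈ Subgroup.center G := Subgroup.zpowers_le.mpr hwcen ha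
    exact (Subgroup.mem_center_iff.mp h1 b).symm


/-- (Adney–Yen) For a finite purely nonabelian `p`-group `G`, the number of central
automorphisms of `G` equals the number of homomorphisms `G → Z(G)`. -/
theorem stmt_16 {G : Type*} [Group G] [Finite G] (p : ℕ) [Fact p.Prime]
    (hG : IsPGroup p G) (hna : ¬ ∀ x y : G, x * y = y * x)
    (hpna : ¬ ∃ A B : Subgroup G, A ≠ ⊥ ∧ (∀ a ∈ A, ∀ a' ∈ A, a * a' = a' * a) ∧
      A ⊓ B = ⊥ ∧ A ⊔ B = ⊤ ∧ (∀ a ∈ A, ∀ b ∈ B, a * b = b * a)) :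
    Nat.card {φ : MulAut G // ∀ g : G, g⁻¹ * φ g ∈ Subgroup.center G} =
      Nat.card (G →* Subgroup.center G) := by
  have key : ∀ (f : G →* Subgroup.center G) (x : G), x * (f x : G) = 1 → x = 1 :=
    fun f x hx => sigma_inj hG hpna f hx
  let Φ : {φ : MulAut G // ∀ g : G, g⁻¹ * φ g ∈ Subgroup.center G} →
      (G →* Subgroup.center G) := fun φ =>
    { toFun := fun g => ⟨g⁻¹ * φ.1 g, φ.2 g⟩
      map_one' := by ext; simp
      map_mul' := by
        intro g h
        ext
        have hc := Subgroup.mem_center_iff.mp (φ.2 g) h⁻¹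
        push_cast
        rw [map_mul]
        calc (g * h)⁻¹ * (φ.1 g * φ.1 h) = (h⁻¹ * (g⁻¹ * φ.1 g)) * φ.1 h := by group
          _ = ((g⁻¹ * φ.1 g) * h⁻¹) * φ.1 h := by rw [hc]
          _ = (g⁻¹ * φ.1 g) * (h⁻¹ * φ.1 h) := by rw [mul_assoc] }
  have hinj : Function.Injective Φ := by
    rintro ⟨φ, hφ⟩ ⟨ψ, hψ⟩ hEq
    have : ∀ g : G, g⁻¹ * φ g = g⁻¹ * ψ g := by
      intro g
      have := congrArg (fun F : G →* Subgroup.center G => ((F g : Subgroup.center G) : G)) hEq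
      simpa [Φ] using this
    ext g
    exact mul_left_cancel (this g)
  have hsurj : Function.Surjective Φ := by
    intro f
    have hcomm : ∀ g h : G, h * (f g : G) = (f g : G) * h := by
      intro g h
      exact Subgroup.mem_center_iff.mp (f g).2 h
    let e : G →* G :=
      { toFun := fun g => g * (f g : G)
        map_one' := by simp
        map_mul' := by
          intro g h
          simp only [map_mul]
          push_cast
          have step1 : g * h * ((f g : G) * (f h : G)) = g * (h * (f g : G)) * (f h : G) := by
            simp only [mul_assoc]
          have step3 : g * ((f g : G) * h) * (f h : G) = g * (f g : G) * (h * (f h : G)) := by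
            simp only [mul_assoc]
          rw [step1, hcomm g h, step3] }
    have heinj : Function.Injective e := by
      rw [injective_iff_map_eq_one]
      intro a ha
      exact key f a ha
    have hebij : Function.Bijective e := Finite.injective_iff_bijective.mp heinj
    let E : MulAut G := MulEquiv.ofBijective e hebij
    have hEapp : ∀ g : G, E g = g * (f g : G) := fun g => rfl
    have hEprop : ∀ g : G, g⁻¹ * E g ∈ Subgroup.center G := by
      intro g
      rw [hEapp, inv_mul_cancel_left]
      exact (f g).2
    refine ⟨⟨E, hEprop⟩, ?_⟩
    ext g
    show (g⁻¹ * E g : G) = (f g : G)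
    rw [hEapp, inv_mul_cancel_left]
  exact Nat.card_eq_of_bijective Φ ⟨hinj, hsurj⟩
end
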